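/- Let α > 1 be a real number. For Lebesgue-almost all x ∈ (0,1], writing x = ⟨d_i⟩_α for its α-expansion, the asymptotic geometric mean of the digits satisfies lim_{n→∞} (d_1 d_2 ⋯ d_n)^{1/n} = ∏_{d=1}^∞ d^{(α−1)/α^d}; equivalently, lim_{n→∞} (1/n)∑_{i=1}^n log d_i = ∑_{d=1}^∞ (α−1) α^{-d} log d. -/

import Mathlib

open MeasureTheory Filter

/-- The α-expansion value ⟨d_i⟩_α = ∑_{i=1}^∞ (α-1)^{i-1} α^{-(d_1+⋯+d_i)},
with the digit sequence `d : ℕ → ℕ` indexed from 0 (so `d 0` is the first digit). -/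
noncomputable def alphaExpansion (α : ℝ) (d : ℕ → ℕ) : ℝ :=
  ∑' i : ℕ, (α - 1) ^ i * α ^ (-((∑ j ∈ Finset.range (i + 1), d j : ℕ) : ℤ))

namespace AlphaExp

variable {α : ℝ}

/-- first digit map -/
noncomputable def D (α x : ℝ) : ℕ := sInf {k : ℕ | α ^ (-(k : ℤ)) < x}

noncomputable def T (α x : ℝ) : ℝ := (x * α ^ D α x - 1) / (α - 1)

lemma D_spec (hα : 1 < α) {x : ℝ} {k : ℕ} (h1 : 1 ≤ k)
    (h : x ∈ Set.Ioc (α ^ (-(k : ℤ))) (α ^ (-(k : ℤ) + 1))) : D α x = k := by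
  have hmem : k ∈ {k : ℕ | α ^ (-(k : ℤ)) < x} := h.1
  refine le_antisymm (Nat.sInf_le hmem) ?_
  by_contra hlt
  push_neg at hlt
  have h2 := Nat.sInf_mem ⟨k, hmem⟩
  have : -(k : ℤ) + 1 ≤ -(D α x : ℤ) := by
    have : (D α x : ℤ) < k := by exact_mod_cast hlt
    omega
  have := zpow_le_zpow_right₀ hα.le this
  exact absurd (h.2.trans this) (not_le.2 h2)

lemma D_mem (hα : 1 < α) {x : ℝ} (hx : x ∈ Set.Ioc (0 : ℝ) 1) :
    1 ≤ D α x ∧ x ∈ Set.Ioc (α ^ (-(D α x : ℤ))) (α ^ (-(D α x : ℤ) + 1)) := by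
  have hα0 : (0 : ℝ) < α := lt_trans one_pos hα
  have hne : {k : ℕ | α ^ (-(k : ℤ)) < x}.Nonempty := by
    obtain ⟨n, hn⟩ := exists_pow_lt_of_lt_one hx.1 (inv_lt_one_of_one_lt₀ hα)
    refine ⟨n, ?_⟩
    show α ^ (-(n : ℤ)) < x
    rwa [zpow_neg, ← inv_zpow, zpow_natCast]
  have hd := Nat.sInf_mem hne
  have h1 : 1 ≤ D α x := by
    rcases Nat.eq_zero_or_pos (D α x) with h | h
    · exfalso
      have h2 : α ^ (-((0:ℕ) : ℤ)) < x := by rw [← h]; exact hd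
      simp only [Nat.cast_zero, neg_zero, zpow_zero] at h2
      exact absurd hx.2 (not_le.2 h2)
    · exact h
  refine ⟨h1, hd, ?_⟩
  have hnot : D α x - 1 ∉ {k : ℕ | α ^ (-(k : ℤ)) < x} :=
    Nat.notMem_of_lt_sInf (show D α x - 1 < D α x by omega)
  simp only [Set.mem_setOf_eq, not_lt] at hnot
  have : -(D α x : ℤ) + 1 = -((D α x - 1 : ℕ) : ℤ) := by
    have : (1 : ℕ) ≤ D α x := h1
    push_cast [this]
    ring
  rw [this]
  exact hnot

lemma T_mem (hα : 1 < α) {x : ℝ} (hx : x ∈ Set.Ioc (0 : ℝ) 1) :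
    T α x ∈ Set.Ioc (0 : ℝ) 1 := by
  have hα0 : (0 : ℝ) < α := lt_trans one_pos hα
  obtain ⟨h1, hmem⟩ := D_mem hα hx
  have hpow : (0 : ℝ) < α ^ D α x := pow_pos hα0 _
  have hzn : α ^ (-(D α x : ℤ)) * α ^ D α x = 1 := by
    rw [← zpow_natCast α (D α x), ← zpow_add₀ (ne_of_gt hα0)]
    simp
  have hlow : 1 < x * α ^ D α x := by
    have := mul_lt_mul_of_pos_right hmem.1 hpow
    rwa [hzn] at this
  have hhigh : x * α ^ D α x ≤ α := by
    have := mul_le_mul_of_nonneg_right hmem.2 hpow.le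
    rwa [zpow_add₀ (ne_of_gt hα0), zpow_one, mul_assoc, mul_comm α, ← mul_assoc, hzn, one_mul]
      at this
  constructor
  · show (0:ℝ) < (x * α ^ D α x - 1) / (α - 1)
    exact div_pos (by linarith) (by linarith)
  · show (x * α ^ D α x - 1) / (α - 1) ≤ 1
    rw [div_le_one (by linarith)]; linarith

end AlphaExp
section Part2

namespace AlphaExp

variable {α : ℝ}

open Finset in
lemma term_le (hα : 1 < α) {d : ℕ → ℕ} (hd : ∀ i, 1 ≤ d i) (i : ℕ) :
    (α - 1) ^ i * α ^ (-((∑ j ∈ Finset.range (i + 1), d j : ℕ) : ℤ))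
      ≤ ((α - 1) / α) ^ i * α⁻¹ := by
  have hα0 : (0 : ℝ) < α := lt_trans one_pos hα
  have hS : (i + 1 : ℕ) ≤ ∑ j ∈ Finset.range (i + 1), d j := by
    calc (i+1 : ℕ) = ∑ _j ∈ Finset.range (i+1), 1 := by simp
    _ ≤ _ := Finset.sum_le_sum fun j _ => hd j
  have h2 : α ^ (-((∑ j ∈ Finset.range (i + 1), d j : ℕ) : ℤ)) ≤ α ^ (-((i:ℤ) + 1)) := by
    apply zpow_le_zpow_right₀ hα.le
    have : ((i + 1 : ℕ) : ℤ) ≤ ((∑ j ∈ Finset.range (i + 1), d j : ℕ) : ℤ) := by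
      exact_mod_cast hS
    push_cast at this ⊢
    omega
  have h3 : (0:ℝ) ≤ (α - 1) ^ i := pow_nonneg (by linarith) _
  calc (α - 1) ^ i * α ^ (-((∑ j ∈ Finset.range (i + 1), d j : ℕ) : ℤ))
      ≤ (α - 1) ^ i * α ^ (-((i:ℤ) + 1)) := mul_le_mul_of_nonneg_left h2 h3
    _ = ((α - 1) / α) ^ i * α⁻¹ := by
        rw [div_pow, neg_add, zpow_add₀ (ne_of_gt hα0), zpow_neg, zpow_neg, zpow_natCast,
          zpow_one]
        field_simp

lemma term_pos (hα : 1 < α) (d : ℕ → ℕ) (i : ℕ) :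
    0 < (α - 1) ^ i * α ^ (-((∑ j ∈ Finset.range (i + 1), d j : ℕ) : ℤ)) :=
  mul_pos (pow_pos (by linarith) _) (zpow_pos (by linarith) _)

lemma ratio_nonneg (hα : 1 < α) : (0:ℝ) ≤ (α - 1)/α := div_nonneg (by linarith) (by linarith)
lemma ratio_lt_one (hα : 1 < α) : (α - 1)/α < 1 := by
  rw [div_lt_one (by linarith)]; linarith

lemma summable_terms (hα : 1 < α) {d : ℕ → ℕ} (hd : ∀ i, 1 ≤ d i) :
    Summable (fun i : ℕ => (α - 1) ^ i * α ^ (-((∑ j ∈ Finset.range (i + 1), d j : ℕ) : ℤ))) := by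
  apply Summable.of_nonneg_of_le (fun i => (term_pos hα d i).le) (term_le hα hd)
  exact (summable_geometric_of_lt_one (ratio_nonneg hα) (ratio_lt_one hα)).mul_right _

lemma exp_mem (hα : 1 < α) {d : ℕ → ℕ} (hd : ∀ i, 1 ≤ d i) :
    alphaExpansion α d ∈ Set.Ioc (0 : ℝ) 1 := by
  constructor
  · exact Summable.tsum_pos (summable_terms hα hd) (fun i => (term_pos hα d i).le) 0 (term_pos hα d 0)
  · have h1 : alphaExpansion α d ≤ ∑' i : ℕ, ((α - 1) / α) ^ i * α⁻¹ :=
      Summable.tsum_le_tsum (term_le hα hd) (summable_terms hα hd)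
        ((summable_geometric_of_lt_one (ratio_nonneg hα) (ratio_lt_one hα)).mul_right _)
    have h2 : ∑' i : ℕ, ((α - 1) / α) ^ i * α⁻¹ = 1 := by
      rw [tsum_mul_right, tsum_geometric_of_lt_one (ratio_nonneg hα) (ratio_lt_one hα)]
      have hα0 : (0 : ℝ) < α := lt_trans one_pos hα
      have : 1 - (α - 1)/α = α⁻¹ := by field_simp; ring
      rw [this, inv_inv]
      field_simp
    linarith

lemma exp_rec (hα : 1 < α) {d : ℕ → ℕ} (hd : ∀ i, 1 ≤ d i) :
    alphaExpansion α d
      = α ^ (-(d 0 : ℤ)) * (1 + (α - 1) * alphaExpansion α (fun n => d (n + 1))) := by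
  have hα0 : (0 : ℝ) < α := lt_trans one_pos hα
  have hsum := summable_terms hα hd
  have hd' : ∀ i, 1 ≤ d (i + 1) := fun i => hd _
  have hsum' := summable_terms hα hd'
  rw [alphaExpansion, Summable.tsum_eq_zero_add hsum]
  have h0 : (α - 1) ^ 0 * α ^ (-((∑ j ∈ Finset.range (0 + 1), d j : ℕ) : ℤ))
      = α ^ (-(d 0 : ℤ)) := by simp
  have hterm : ∀ i : ℕ,
      (α - 1) ^ (i + 1) * α ^ (-((∑ j ∈ Finset.range (i + 1 + 1), d j : ℕ) : ℤ))
      = (α ^ (-(d 0 : ℤ)) * (α - 1)) *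
        ((α - 1) ^ i * α ^ (-((∑ j ∈ Finset.range (i + 1), d (j + 1) : ℕ) : ℤ))) := by
    intro i
    have hS : (∑ j ∈ Finset.range (i + 1 + 1), d j : ℕ)
        = (∑ j ∈ Finset.range (i + 1), d (j + 1)) + d 0 := Finset.sum_range_succ' d (i+1)
    rw [hS]
    push_cast
    rw [neg_add, zpow_add₀ (ne_of_gt hα0)]
    ring
  calc (α - 1) ^ 0 * α ^ (-((∑ j ∈ Finset.range (0 + 1), d j : ℕ) : ℤ))
        + ∑' i : ℕ, (α - 1) ^ (i+1) * α ^ (-((∑ j ∈ Finset.range (i + 1 + 1), d j : ℕ) : ℤ))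
      = α ^ (-(d 0 : ℤ)) + ∑' i : ℕ, (α ^ (-(d 0 : ℤ)) * (α - 1)) *
          ((α - 1) ^ i * α ^ (-((∑ j ∈ Finset.range (i + 1), d (j + 1) : ℕ) : ℤ))) := by
        rw [h0]
        congr 1
        exact tsum_congr hterm
    _ = α ^ (-(d 0 : ℤ)) * (1 + (α - 1) * alphaExpansion α (fun n => d (n + 1))) := by
        rw [tsum_mul_left, alphaExpansion]
        ring

lemma exp_digit (hα : 1 < α) {d : ℕ → ℕ} (hd : ∀ i, 1 ≤ d i) :
    D α (alphaExpansion α d) = d 0 ∧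
      T α (alphaExpansion α d) = alphaExpansion α (fun n => d (n + 1)) := by
  have hα0 : (0 : ℝ) < α := lt_trans one_pos hα
  have hd' : ∀ i, 1 ≤ d (i + 1) := fun i => hd _
  set y := alphaExpansion α (fun n => d (n + 1)) with hy
  have hymem := exp_mem hα hd'
  rw [← hy] at hymem
  have hrec := exp_rec hα hd
  rw [← hy] at hrec
  have hD : D α (alphaExpansion α d) = d 0 := by
    apply D_spec hα (hd 0)
    constructor
    · rw [hrec]
      have : (1:ℝ) < 1 + (α - 1) * y := by nlinarith [hymem.1]
      nlinarith [zpow_pos hα0 (-(d 0 : ℤ))]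
    · rw [hrec, zpow_add₀ (ne_of_gt hα0), zpow_one]
      have : 1 + (α - 1) * y ≤ α := by nlinarith [hymem.2]
      nlinarith [zpow_pos hα0 (-(d 0 : ℤ))]
  refine ⟨hD, ?_⟩
  rw [T, hD, hrec]
  have hzn : α ^ (-(d 0 : ℤ)) * α ^ (d 0) = 1 := by
    rw [← zpow_natCast α (d 0), ← zpow_add₀ (ne_of_gt hα0)]
    simp
  have : α ^ (-(d 0 : ℤ)) * (1 + (α - 1) * y) * α ^ (d 0) = 1 + (α - 1) * y := by
    rw [mul_comm _ (α ^ (d 0)), ← mul_assoc, mul_comm (α ^ (d 0)), hzn, one_mul]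
  rw [this]
  rw [add_comm, add_sub_cancel_right]
  exact mul_div_cancel_left₀ y (ne_of_gt (by linarith))

lemma digits_eq (hα : 1 < α) :
    ∀ (n : ℕ) (d : ℕ → ℕ), (∀ i, 1 ≤ d i) →
      d n = D α ((T α)^[n] (alphaExpansion α d)) := by
  intro n
  induction n with
  | zero => intro d hd; simp [(exp_digit hα hd).1]
  | succ n ih =>
    intro d hd
    have hd' : ∀ i, 1 ≤ d (i + 1) := fun i => hd _
    have h1 := ih (fun n => d (n + 1)) hd'
    rw [Function.iterate_succ_apply, (exp_digit hα hd).2]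
    exact h1

end AlphaExp

end Part2
section Part3

namespace AlphaExp

open ENNReal

variable {α : ℝ}

lemma D_eq_iff (hα : 1 < α) {x : ℝ} {k : ℕ} (hk : 1 ≤ k) :
    D α x = k ↔ x ∈ Set.Ioc (α ^ (-(k : ℤ))) (α ^ (-(k : ℤ) + 1)) := by
  constructor
  · intro h
    have hne : {j : ℕ | α ^ (-(j : ℤ)) < x}.Nonempty := by
      by_contra hemp
      rw [Set.not_nonempty_iff_eq_empty] at hemp
      have h0 : D α x = 0 := by rw [D, hemp]; simp
      omega
    have hmem := Nat.sInf_mem hne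
    rw [show sInf {j : ℕ | α ^ (-(j : ℤ)) < x} = D α x from rfl, h] at hmem
    have hx1 : x ≤ 1 := by
      by_contra hgt
      push_neg at hgt
      have h0 : (0 : ℕ) ∈ {j : ℕ | α ^ (-(j : ℤ)) < x} := by
        simp only [Set.mem_setOf_eq, Nat.cast_zero, neg_zero, zpow_zero]; exact hgt
      have h1 := Nat.sInf_le h0
      rw [show sInf {j : ℕ | α ^ (-(j : ℤ)) < x} = D α x from rfl, h] at h1
      omega
    have hx0 : 0 < x := lt_trans (zpow_pos (by linarith) _) hmem
    have := (D_mem hα ⟨hx0, hx1⟩).2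
    rwa [h] at this
  · exact D_spec hα hk

lemma fiber_eq (hα : 1 < α) (k : ℕ) :
    D α ⁻¹' {k + 1} = Set.Ioc (α ^ (-(k + 1 : ℤ))) (α ^ (-(k + 1 : ℤ) + 1)) := by
  ext x
  have := D_eq_iff (x := x) hα (k := k + 1) (by omega)
  simp only [Set.mem_preimage, Set.mem_singleton_iff]
  rw [this]
  norm_num

lemma measurable_D (hα : 1 < α) : Measurable (D α) := by
  apply measurable_to_countable'
  intro k
  match k with
  | Nat.succ k => rw [fiber_eq hα k]; exact measurableSet_Ioc
  | 0 =>
    have : D α ⁻¹' {0} = (⋃ k : ℕ, D α ⁻¹' {k + 1})ᶜ := by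
      ext x
      simp only [Set.mem_preimage, Set.mem_singleton_iff, Set.mem_compl_iff, Set.mem_iUnion,
        not_exists]
      constructor
      · intro h k; omega
      · intro h
        by_contra h0
        exact h (D α x - 1) (by omega)
    rw [this]
    exact (MeasurableSet.iUnion fun k => by
      rw [fiber_eq hα k]; exact measurableSet_Ioc).compl

lemma measurable_T (hα : 1 < α) : Measurable (T α) := by
  have h1 : Measurable fun x : ℝ => α ^ D α x :=
    (measurable_from_nat (f := fun k : ℕ => α ^ k)).comp (measurable_D hα)
  exact ((measurable_id.mul h1).sub measurable_const).div_const _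

lemma Ioc_subset_Ioc01 (hα : 1 < α) (k : ℕ) :
    Set.Ioc (α ^ (-(k + 1 : ℤ))) (α ^ (-(k + 1 : ℤ) + 1)) ⊆ Set.Ioc (0 : ℝ) 1 := by
  intro x hx
  refine ⟨lt_trans (zpow_pos (by linarith) _) hx.1, hx.2.trans ?_⟩
  calc α ^ (-(k + 1 : ℤ) + 1) ≤ α ^ (0 : ℤ) := zpow_le_zpow_right₀ hα.le (by omega)
    _ = 1 := zpow_zero α

lemma Ioc01_eq_iUnion (hα : 1 < α) :
    Set.Ioc (0 : ℝ) 1 = ⋃ k : ℕ, D α ⁻¹' {k + 1} := by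
  ext x
  simp only [Set.mem_iUnion, Set.mem_preimage, Set.mem_singleton_iff]
  constructor
  · intro hx
    obtain ⟨h1, _⟩ := D_mem hα hx
    exact ⟨D α x - 1, by omega⟩
  · rintro ⟨k, hk⟩
    have := (D_eq_iff hα (k := k + 1) (by omega)).mp (by exact_mod_cast hk)
    exact Ioc_subset_Ioc01 hα k (by exact_mod_cast this)

/-- Key affine computation: volume of a digit cylinder refined by `T`. -/
lemma vol_fiber_inter (hα : 1 < α) {k : ℕ} (hk : 1 ≤ k) {A : Set ℝ}
    (hA1 : A ⊆ Set.Ioc (0 : ℝ) 1) :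
    volume (Set.Ioc (α ^ (-(k : ℤ))) (α ^ (-(k : ℤ) + 1)) ∩ T α ⁻¹' A)
      = ENNReal.ofReal ((α - 1) * α ^ (-(k : ℤ))) * volume A := by
  have hα0 : (0 : ℝ) < α := lt_trans one_pos hα
  have hαk : (0 : ℝ) < (α : ℝ) ^ k := pow_pos hα0 _
  have hzn : α ^ (-(k : ℤ)) * α ^ k = 1 := by
    rw [← zpow_natCast α k, ← zpow_add₀ (ne_of_gt hα0)]; simp
  set h : ℝ → ℝ := fun x => (x * α ^ k - 1) / (α - 1) with hh
  -- step 1 : set equality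
  have hset : Set.Ioc (α ^ (-(k : ℤ))) (α ^ (-(k : ℤ) + 1)) ∩ T α ⁻¹' A = h ⁻¹' A := by
    ext x
    simp only [Set.mem_inter_iff, Set.mem_preimage]
    constructor
    · rintro ⟨hxI, hxT⟩
      have hD : D α x = k := D_spec hα hk hxI
      rwa [T, hD] at hxT
    · intro hxh
      have hmem := hA1 hxh
      have h1 : 1 < x * α ^ k := by
        have h0 : (0:ℝ) < (x * α ^ k - 1) / (α - 1) := hmem.1
        have h0' := mul_pos h0 (show (0:ℝ) < α - 1 by linarith)
        rw [div_mul_cancel₀ _ (show (α:ℝ) - 1 ≠ 0 by linarith)] at h0'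
        linarith
      have h2 : x * α ^ k ≤ α := by
        have h0 : (x * α ^ k - 1) / (α - 1) ≤ 1 := hmem.2
        rw [div_le_one (by linarith)] at h0
        linarith
      have hkey : x * α ^ k * α ^ (-(k : ℤ)) = x := by
        rw [mul_assoc, mul_comm ((α:ℝ) ^ k), hzn, mul_one]
      have hxI : x ∈ Set.Ioc (α ^ (-(k : ℤ))) (α ^ (-(k : ℤ) + 1)) := by
        constructor
        · have h3 := mul_lt_mul_of_pos_right h1 (zpow_pos hα0 (-(k:ℤ)))
          rw [one_mul, hkey] at h3
          exact h3
        · have h3 := mul_le_mul_of_nonneg_right h2 (zpow_pos hα0 (-(k:ℤ))).le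
          rw [hkey] at h3
          rw [zpow_add₀ (ne_of_gt hα0), zpow_one, mul_comm]
          exact h3
      have hD : D α x = k := D_spec hα hk hxI
      exact ⟨hxI, by rwa [T, hD]⟩
  rw [hset]
  -- step 2 : affine volume computation
  have hdecomp : h ⁻¹' A
      = (fun x : ℝ => (α:ℝ) ^ k * x) ⁻¹'
          ((fun y : ℝ => -1 + y) ⁻¹' ((fun z : ℝ => (α - 1)⁻¹ * z) ⁻¹' A)) := by
    ext x
    simp only [Set.mem_preimage, hh]
    rw [div_eq_inv_mul]
    ring_nf
  rw [hdecomp, Real.volume_preimage_mul_left (ne_of_gt hαk),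
    measure_preimage_add volume (-1) _,
    Real.volume_preimage_mul_left (inv_ne_zero (by linarith : α - 1 ≠ 0))]
  rw [inv_inv, abs_of_pos (by linarith : (0:ℝ) < α - 1),
    abs_of_pos (inv_pos.2 hαk), ← mul_assoc, ← ENNReal.ofReal_mul (by positivity)]
  congr 2
  rw [mul_comm, ← zpow_natCast α k, ← zpow_neg]

lemma tsum_p_one (hα : 1 < α) :
    ∑' k : ℕ, ENNReal.ofReal ((α - 1) * α ^ (-(k + 1 : ℤ))) = 1 := by
  have hα0 : (0 : ℝ) < α := lt_trans one_pos hα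
  have hinv : (α : ℝ)⁻¹ < 1 := inv_lt_one_of_one_lt₀ hα
  have hinv0 : (0:ℝ) ≤ α⁻¹ := by positivity
  have hfe : ∀ k : ℕ, (α - 1) * α ^ (-(k + 1 : ℤ)) = ((α - 1) * α⁻¹) * α⁻¹ ^ k := by
    intro k
    rw [neg_add, zpow_add₀ (ne_of_gt hα0), zpow_neg, zpow_neg, zpow_natCast, zpow_one, inv_pow]
    ring
  have hsum : Summable fun k : ℕ => (α - 1) * α ^ (-(k + 1 : ℤ)) := by
    simp only [hfe]
    exact (summable_geometric_of_lt_one hinv0 hinv).mul_left _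
  rw [← ENNReal.ofReal_tsum_of_nonneg
    (fun k => mul_nonneg (by linarith) (zpow_pos hα0 _).le) hsum]
  have : ∑' k : ℕ, (α - 1) * α ^ (-(k + 1 : ℤ)) = 1 := by
    simp only [hfe]
    rw [tsum_mul_left, tsum_geometric_of_lt_one hinv0 hinv]
    have h1 : 1 - α⁻¹ = (α - 1)/α := by field_simp
    rw [h1]
    field_simp
    exact div_self (show (α:ℝ) - 1 ≠ 0 by linarith)
  rw [this, ENNReal.ofReal_one]

lemma map_T (hα : 1 < α) :
    Measure.map (T α) (volume.restrict (Set.Ioc (0:ℝ) 1))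
      = volume.restrict (Set.Ioc (0:ℝ) 1) := by
  set μ := volume.restrict (Set.Ioc (0:ℝ) 1) with hμ
  ext A hA
  rw [Measure.map_apply (measurable_T hα) hA, hμ,
    Measure.restrict_apply ((measurable_T hα) hA), Measure.restrict_apply hA]
  set A' := A ∩ Set.Ioc (0:ℝ) 1 with hA'
  have hA'm : MeasurableSet A' := hA.inter measurableSet_Ioc
  have hA'1 : A' ⊆ Set.Ioc (0:ℝ) 1 := Set.inter_subset_right
  have hstep : T α ⁻¹' A ∩ Set.Ioc (0:ℝ) 1 = T α ⁻¹' A' ∩ Set.Ioc (0:ℝ) 1 := by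
    ext x
    simp only [Set.mem_inter_iff, Set.mem_preimage, hA']
    constructor
    · rintro ⟨h1, h2⟩; exact ⟨⟨h1, T_mem hα h2⟩, h2⟩
    · rintro ⟨⟨h1, _⟩, h2⟩; exact ⟨h1, h2⟩
  rw [hstep]
  have hdecomp : T α ⁻¹' A' ∩ Set.Ioc (0:ℝ) 1
      = ⋃ k : ℕ, (D α ⁻¹' {k + 1} ∩ T α ⁻¹' A') := by
    rw [Ioc01_eq_iUnion hα, Set.inter_iUnion]
    ext x; simp only [Set.mem_iUnion, Set.mem_inter_iff]; tauto
  rw [hdecomp]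
  have hdisj : Pairwise (Function.onFun Disjoint
      fun k : ℕ => (D α ⁻¹' {k + 1} ∩ T α ⁻¹' A')) := by
    intro i j hij
    refine Set.disjoint_left.2 ?_
    rintro x ⟨hxi, -⟩ ⟨hxj, -⟩
    simp only [Set.mem_preimage, Set.mem_singleton_iff] at hxi hxj
    omega
  have hmeas : ∀ k : ℕ, MeasurableSet (D α ⁻¹' {k + 1} ∩ T α ⁻¹' A') := fun k =>
    ((measurable_D hα) (MeasurableSet.singleton _)).inter ((measurable_T hα) hA'm)
  rw [measure_iUnion hdisj hmeas]
  have hterm : ∀ k : ℕ, volume (D α ⁻¹' {k + 1} ∩ T α ⁻¹' A')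
      = ENNReal.ofReal ((α - 1) * α ^ (-(k + 1 : ℤ))) * volume A' := by
    intro k
    rw [fiber_eq hα k]
    have := vol_fiber_inter hα (k := k + 1) (by omega) (A := A') hA'1
    push_cast at this ⊢
    exact this
  simp only [hterm]
  rw [ENNReal.tsum_mul_right, tsum_p_one hα, one_mul]

lemma measurePreserving_T (hα : 1 < α) :
    MeasurePreserving (T α) (volume.restrict (Set.Ioc (0:ℝ) 1))
      (volume.restrict (Set.Ioc (0:ℝ) 1)) :=
  ⟨measurable_T hα, map_T hα⟩

end AlphaExp

end Part3
section Part4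

namespace AlphaExp

open ENNReal

variable {α : ℝ}

/-- the `i`-th digit of `x` -/
noncomputable def dig (α : ℝ) (i : ℕ) (x : ℝ) : ℕ := D α ((T α)^[i] x)

lemma measurable_dig (hα : 1 < α) (i : ℕ) : Measurable (dig α i) :=
  (measurable_D hα).comp ((measurable_T hα).iterate i)

lemma map_iterT (hα : 1 < α) (n : ℕ) :
    Measure.map ((T α)^[n]) (volume.restrict (Set.Ioc (0:ℝ) 1))
      = volume.restrict (Set.Ioc (0:ℝ) 1) :=
  ((measurePreserving_T hα).iterate n).map_eq

lemma map_dig (hα : 1 < α) (i : ℕ) :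
    Measure.map (dig α i) (volume.restrict (Set.Ioc (0:ℝ) 1))
      = Measure.map (D α) (volume.restrict (Set.Ioc (0:ℝ) 1)) := by
  have : dig α i = D α ∘ (T α)^[i] := rfl
  rw [this, ← Measure.map_map (measurable_D hα) ((measurable_T hα).iterate i),
    map_iterT hα]

lemma vol_dig_fiber (hα : 1 < α) (i : ℕ) (k : ℕ) :
    (volume.restrict (Set.Ioc (0:ℝ) 1)) (dig α i ⁻¹' {k + 1})
      = ENNReal.ofReal ((α - 1) * α ^ (-(k + 1 : ℤ))) := by
  have h1 : (volume.restrict (Set.Ioc (0:ℝ) 1)) (dig α i ⁻¹' {k + 1})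
      = (volume.restrict (Set.Ioc (0:ℝ) 1)) (D α ⁻¹' {k + 1}) := by
    rw [← Measure.map_apply (measurable_dig hα i) (MeasurableSet.singleton _),
      ← Measure.map_apply (measurable_D hα) (MeasurableSet.singleton _), map_dig hα]
  rw [h1, Measure.restrict_apply ((measurable_D hα) (MeasurableSet.singleton _)),
    Set.inter_eq_self_of_subset_left (by rw [fiber_eq hα k]; exact Ioc_subset_Ioc01 hα k),
    fiber_eq hα k, Real.volume_Ioc]
  congr 1
  have hα0 : (0 : ℝ) < α := lt_trans one_pos hα
  rw [zpow_add₀ (ne_of_gt hα0), zpow_one]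
  ring

lemma vol_dig_fiber0 (hα : 1 < α) (i : ℕ) :
    (volume.restrict (Set.Ioc (0:ℝ) 1)) (dig α i ⁻¹' {0}) = 0 := by
  have h1 : (volume.restrict (Set.Ioc (0:ℝ) 1)) (dig α i ⁻¹' {0})
      = (volume.restrict (Set.Ioc (0:ℝ) 1)) (D α ⁻¹' {0}) := by
    rw [← Measure.map_apply (measurable_dig hα i) (MeasurableSet.singleton _),
      ← Measure.map_apply (measurable_D hα) (MeasurableSet.singleton _), map_dig hα]
  rw [h1, Measure.restrict_apply ((measurable_D hα) (MeasurableSet.singleton _))]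
  have : D α ⁻¹' {0} ∩ Set.Ioc 0 1 = ∅ := by
    ext x
    simp only [Set.mem_inter_iff, Set.mem_preimage, Set.mem_singleton_iff,
      Set.mem_empty_iff_false, iff_false, not_and]
    intro h0 hx
    have := (D_mem hα hx).1
    omega
  rw [this]
  exact measure_empty

lemma indep_singleton (hα : 1 < α) (l k m : ℕ) :
    (volume.restrict (Set.Ioc (0:ℝ) 1)) (dig α 0 ⁻¹' {k} ∩ dig α (l + 1) ⁻¹' {m})
      = (volume.restrict (Set.Ioc (0:ℝ) 1)) (dig α 0 ⁻¹' {k})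
        * (volume.restrict (Set.Ioc (0:ℝ) 1)) (dig α (l + 1) ⁻¹' {m}) := by
  set μ := volume.restrict (Set.Ioc (0:ℝ) 1) with hμ
  have hdig0 : dig α 0 = D α := by funext x; rfl
  match k with
  | 0 =>
    have hz : μ (dig α 0 ⁻¹' {0}) = 0 := vol_dig_fiber0 hα 0
    have : μ (dig α 0 ⁻¹' {0} ∩ dig α (l + 1) ⁻¹' {m}) = 0 :=
      le_antisymm (le_trans (measure_mono Set.inter_subset_left) hz.le) zero_le
    rw [this, hz, zero_mul]
  | k + 1 =>
    -- rewrite dig (l+1) as dig l ∘ T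
    have hshift : dig α (l + 1) ⁻¹' {m} = T α ⁻¹' (dig α l ⁻¹' {m}) := by
      ext x
      simp only [Set.mem_preimage, Set.mem_singleton_iff, dig,
        Function.iterate_succ_apply]
    set B := dig α l ⁻¹' {m} with hB
    have hBm : MeasurableSet B := (measurable_dig hα l) (MeasurableSet.singleton _)
    set B' := B ∩ Set.Ioc (0:ℝ) 1 with hB'
    have hfibsub : D α ⁻¹' {k + 1} ⊆ Set.Ioc (0:ℝ) 1 := by
      rw [fiber_eq hα k]; exact Ioc_subset_Ioc01 hα k
    have hset : D α ⁻¹' {k + 1} ∩ T α ⁻¹' B = D α ⁻¹' {k + 1} ∩ T α ⁻¹' B' := by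
      ext x
      simp only [Set.mem_inter_iff, Set.mem_preimage, hB']
      constructor
      · rintro ⟨h1, h2⟩
        exact ⟨h1, Set.mem_inter h2 (T_mem hα (hfibsub h1))⟩
      · rintro ⟨h1, h2, _⟩; exact ⟨h1, h2⟩
    have hLHS : μ (dig α 0 ⁻¹' {k + 1} ∩ dig α (l + 1) ⁻¹' {m})
        = volume (D α ⁻¹' {k + 1} ∩ T α ⁻¹' B') := by
      rw [hμ, Measure.restrict_apply
        (((measurable_dig hα 0) (MeasurableSet.singleton _)).inter
          ((measurable_dig hα (l+1)) (MeasurableSet.singleton _))),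
        hdig0, hshift, hset]
      rw [Set.inter_assoc, Set.inter_comm (T α ⁻¹' B'), ← Set.inter_assoc,
        Set.inter_eq_self_of_subset_left hfibsub]
    rw [hLHS]
    have hkey : volume (D α ⁻¹' {k + 1} ∩ T α ⁻¹' B')
        = ENNReal.ofReal ((α - 1) * α ^ (-(k + 1 : ℤ))) * volume B' := by
      rw [fiber_eq hα k]
      have := vol_fiber_inter hα (k := k + 1) (by omega) (A := B')
        Set.inter_subset_right
      push_cast at this ⊢
      exact this
    rw [hkey]
    have h1 : volume B' = μ B := by rw [hμ, Measure.restrict_apply hBm, hB']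
    have h2 : μ B = μ (dig α (l + 1) ⁻¹' {m}) := by
      rw [hB, ← Measure.map_apply (measurable_dig hα l) (MeasurableSet.singleton _),
        ← Measure.map_apply (measurable_dig hα (l+1)) (MeasurableSet.singleton _),
        map_dig hα, map_dig hα]
    rw [h1, h2]
    congr 1
    exact (vol_dig_fiber hα 0 k).symm

instance prob01 : IsProbabilityMeasure (volume.restrict (Set.Ioc (0:ℝ) 1)) := by
  constructor
  simp [Real.volume_Ioc]

open ProbabilityTheory in
lemma indepFun_dig (hα : 1 < α) {i j : ℕ} (hij : i < j) :
    IndepFun (dig α i) (dig α j) (volume.restrict (Set.Ioc (0:ℝ) 1)) := by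
  set μ := volume.restrict (Set.Ioc (0:ℝ) 1) with hμ
  -- the key: measure of pairwise singleton fibers factorizes
  have key : ∀ k m : ℕ, μ (dig α i ⁻¹' {k} ∩ dig α j ⁻¹' {m})
      = μ (dig α i ⁻¹' {k}) * μ (dig α j ⁻¹' {m}) := by
    intro k m
    -- reduce to i = 0 by applying T^[i]
    have hji : j = (j - i - 1 + 1) + i := by omega
    set l := j - i - 1 with hl
    have hdigj : dig α j = fun x => dig α (l + 1) ((T α)^[i] x) := by
      funext x
      rw [hji]
      simp only [dig, Function.iterate_add_apply]
    have hdigi : dig α i = fun x => dig α 0 ((T α)^[i] x) := by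
      funext x; simp only [dig, Function.iterate_zero_apply]
    have hpre : dig α i ⁻¹' {k} ∩ dig α j ⁻¹' {m}
        = (T α)^[i] ⁻¹' (dig α 0 ⁻¹' {k} ∩ dig α (l + 1) ⁻¹' {m}) := by
      rw [hdigi, hdigj]
      rfl
    have hmap : ∀ (S : Set ℝ), MeasurableSet S → μ ((T α)^[i] ⁻¹' S) = μ S := by
      intro S hS
      rw [hμ, ← Measure.map_apply ((measurable_T hα).iterate i) hS, map_iterT hα i]
    rw [hpre, hmap _ (((measurable_dig hα 0) (MeasurableSet.singleton _)).inter
      ((measurable_dig hα (l+1)) (MeasurableSet.singleton _))),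
      indep_singleton hα l k m]
    congr 1
    · rw [hdigi]
      exact (hmap _ ((measurable_dig hα 0) (MeasurableSet.singleton _))).symm
    · rw [hdigj]
      exact (hmap _ ((measurable_dig hα (l+1)) (MeasurableSet.singleton _))).symm
  rw [indepFun_iff_map_prod_eq_prod_map_map (measurable_dig hα i).aemeasurable
    (measurable_dig hα j).aemeasurable]
  apply Measure.ext_iff_singleton.2
  rintro ⟨k, m⟩
  have hpre : (fun x => (dig α i x, dig α j x)) ⁻¹' {(k, m)}
      = dig α i ⁻¹' {k} ∩ dig α j ⁻¹' {m} := by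
    ext x
    simp [Prod.ext_iff]
  rw [Measure.map_apply ((measurable_dig hα i).prodMk (measurable_dig hα j))
      (MeasurableSet.singleton _), hpre,
    show ({(k, m)} : Set (ℕ × ℕ)) = {k} ×ˢ {m} by simp,
    Measure.prod_prod,
    Measure.map_apply (measurable_dig hα i) (MeasurableSet.singleton _),
    Measure.map_apply (measurable_dig hα j) (MeasurableSet.singleton _)]
  exact key k m

end AlphaExp

end Part4
section Part5

namespace AlphaExp

open ENNReal

variable {α : ℝ}

lemma zpow_neg_eq_inv_pow (hα : 1 < α) (k : ℕ) :
    α ^ (-(k + 1 : ℤ)) = α⁻¹ ^ (k + 1) := by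
  have : (-(k + 1 : ℤ)) = -(((k + 1 : ℕ) : ℤ)) := by push_cast; ring
  rw [this, zpow_neg, zpow_natCast, inv_pow]

lemma summable_plog (hα : 1 < α) :
    Summable (fun k : ℕ => (α - 1) * α ^ (-(k + 1 : ℤ)) * Real.log (k + 1)) := by
  have hα0 : (0 : ℝ) < α := lt_trans one_pos hα
  have hr : ‖(α⁻¹ : ℝ)‖ < 1 := by
    rw [Real.norm_eq_abs, abs_of_pos (by positivity)]
    exact inv_lt_one_of_one_lt₀ hα
  have h1 : Summable (fun n : ℕ => (n : ℝ) ^ 1 * α⁻¹ ^ n) :=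
    summable_pow_mul_geometric_of_norm_lt_one 1 hr
  have h2 : Summable (fun k : ℕ => ((k + 1 : ℕ) : ℝ) ^ 1 * α⁻¹ ^ (k + 1)) :=
    h1.comp_injective (add_left_injective 1)
  have h3 : Summable (fun k : ℕ => (α - 1) * (((k + 1 : ℕ) : ℝ) ^ 1 * α⁻¹ ^ (k + 1))) :=
    h2.mul_left _
  apply Summable.of_nonneg_of_le _ _ h3
  · intro k
    have : (0:ℝ) ≤ Real.log (k + 1) := Real.log_nonneg (by push_cast; linarith)
    have h4 : (0:ℝ) < α ^ (-(k + 1 : ℤ)) := zpow_pos hα0 _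
    have hα1 : (0:ℝ) ≤ α - 1 := by linarith
    exact mul_nonneg (mul_nonneg hα1 h4.le) this
  · intro k
    rw [zpow_neg_eq_inv_pow hα k]
    have hlog : Real.log ((k : ℝ) + 1) ≤ (k : ℝ) + 1 :=
      (Real.log_le_sub_one_of_pos (by positivity)).trans (by linarith)
    have hpow : (0:ℝ) ≤ α⁻¹ ^ (k + 1) := by positivity
    have hα1 : (0:ℝ) ≤ α - 1 := by linarith
    push_cast
    calc (α - 1) * α⁻¹ ^ (k + 1) * Real.log ((k:ℝ) + 1)
        ≤ (α - 1) * α⁻¹ ^ (k + 1) * ((k:ℝ) + 1) :=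
          mul_le_mul_of_nonneg_left hlog (by positivity)
      _ = (α - 1) * (((k:ℝ) + 1) ^ 1 * α⁻¹ ^ (k + 1)) := by ring

lemma vol_fiber_abs (hα : 1 < α) (k : ℕ) :
    volume (D α ⁻¹' {k + 1}) = ENNReal.ofReal ((α - 1) * α ^ (-(k + 1 : ℤ))) := by
  have hα0 : (0 : ℝ) < α := lt_trans one_pos hα
  rw [fiber_eq hα k, Real.volume_Ioc]
  congr 1
  rw [zpow_add₀ (ne_of_gt hα0), zpow_one]
  ring

lemma mu_eq_sum (hα : 1 < α) :
    volume.restrict (Set.Ioc (0:ℝ) 1)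
      = Measure.sum (fun k : ℕ => volume.restrict (D α ⁻¹' {k + 1})) := by
  rw [Ioc01_eq_iUnion hα]
  apply Measure.restrict_iUnion
  · intro i j hij
    refine Set.disjoint_left.2 ?_
    rintro x hxi hxj
    simp only [Set.mem_preimage, Set.mem_singleton_iff] at hxi hxj
    omega
  · exact fun k => (measurable_D hα) (MeasurableSet.singleton _)

lemma measurable_logD (hα : 1 < α) : Measurable (fun x => Real.log (D α x)) :=
  (measurable_from_nat (f := fun k : ℕ => Real.log k)).comp (measurable_D hα)

lemma integrable_logD (hα : 1 < α) :
    Integrable (fun x => Real.log (D α x)) (volume.restrict (Set.Ioc (0:ℝ) 1)) := by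
  refine ⟨(measurable_logD hα).aestronglyMeasurable, ?_⟩
  show (∫⁻ x, ‖Real.log (D α x)‖₊ ∂(volume.restrict (Set.Ioc (0:ℝ) 1))) < ⊤
  rw [mu_eq_sum hα, lintegral_sum_measure]
  have hterm : ∀ k : ℕ,
      (∫⁻ x, ‖Real.log (D α x)‖₊ ∂(volume.restrict (D α ⁻¹' {k + 1})))
        = ENNReal.ofReal ((α - 1) * α ^ (-(k + 1 : ℤ)) * Real.log (k + 1)) := by
    intro k
    have hs : MeasurableSet (D α ⁻¹' {k + 1}) := (measurable_D hα) (MeasurableSet.singleton _)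
    have hcongr : (∫⁻ x in D α ⁻¹' {k + 1}, ‖Real.log (D α x)‖₊ ∂volume)
        = ∫⁻ _x in D α ⁻¹' {k + 1}, (‖Real.log ((k : ℝ) + 1)‖₊ : ℝ≥0∞) ∂volume := by
      apply setLIntegral_congr_fun hs
      intro x hx
      beta_reduce
      simp only [Set.mem_preimage, Set.mem_singleton_iff] at hx
      rw [hx]
      push_cast
      rfl
    rw [hcongr, setLIntegral_const, vol_fiber_abs hα k]
    have hlognn : (0:ℝ) ≤ Real.log ((k:ℝ) + 1) := Real.log_nonneg (by linarith [Nat.cast_nonneg (α := ℝ) k])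
    rw [← enorm_eq_nnnorm, ← ofReal_norm, Real.norm_eq_abs, abs_of_nonneg hlognn,
      ← ENNReal.ofReal_mul hlognn]
    congr 1
    push_cast
    ring
  simp only [hterm]
  rw [← ENNReal.ofReal_tsum_of_nonneg (fun k => ?_) (summable_plog hα)]
  · exact ofReal_lt_top
  · have h4 : (0:ℝ) < α ^ (-(k + 1 : ℤ)) := zpow_pos (by linarith) _
    have : (0:ℝ) ≤ Real.log (k + 1) := Real.log_nonneg (by push_cast; linarith)
    have hα1 : (0:ℝ) ≤ α - 1 := by linarith
    positivity

lemma integral_logD (hα : 1 < α) :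
    (∫ x, Real.log (D α x) ∂(volume.restrict (Set.Ioc (0:ℝ) 1)))
      = ∑' k : ℕ, (α - 1) * α ^ (-(k + 1 : ℤ)) * Real.log (k + 1) := by
  have hint := integrable_logD hα
  rw [mu_eq_sum hα] at hint ⊢
  rw [integral_sum_measure hint]
  apply tsum_congr
  intro k
  have hs : MeasurableSet (D α ⁻¹' {k + 1}) := (measurable_D hα) (MeasurableSet.singleton _)
  have hcongr : (∫ x in D α ⁻¹' {k + 1}, Real.log (D α x) ∂volume)
      = ∫ _x in D α ⁻¹' {k + 1}, Real.log ((k : ℝ) + 1) ∂volume := by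
    apply setIntegral_congr_fun hs
    intro x hx
    simp only [Set.mem_preimage, Set.mem_singleton_iff] at hx
    simp only [hx]
    push_cast
    ring_nf
  rw [hcongr, setIntegral_const, measureReal_def, vol_fiber_abs hα k]
  have hp : (0:ℝ) ≤ (α - 1) * α ^ (-(k + 1 : ℤ)) := by
    have h4 : (0:ℝ) < α ^ (-(k + 1 : ℤ)) := zpow_pos (by linarith) _
    nlinarith
  rw [ENNReal.toReal_ofReal hp, smul_eq_mul]

end AlphaExp

end Part5
section Part6

namespace AlphaExp

open ProbabilityTheory Finset

variable {α : ℝ}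

lemma strong_law (hα : 1 < α) :
    ∀ᵐ x ∂(volume.restrict (Set.Ioc (0:ℝ) 1)),
      Tendsto (fun n : ℕ => (∑ i ∈ Finset.range n, Real.log (dig α i x)) / n) atTop
        (nhds (∑' k : ℕ, (α - 1) * α ^ (-(k + 1 : ℤ)) * Real.log (k + 1))) := by
  set μ := volume.restrict (Set.Ioc (0:ℝ) 1) with hμ
  set X : ℕ → ℝ → ℝ := fun i x => Real.log (dig α i x) with hX
  have hdig0 : dig α 0 = D α := funext fun x => rfl
  have hint : Integrable (X 0) μ := by
    have : X 0 = fun x => Real.log (D α x) := by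
      funext x; simp only [hX, hdig0]
    rw [this]
    exact integrable_logD hα
  have hindep : Pairwise (Function.onFun (IndepFun · · μ) X) := by
    intro i j hij
    have hcomp : ∀ m : ℕ, X m = (fun k : ℕ => Real.log k) ∘ dig α m := fun m => rfl
    rw [Function.onFun, hcomp i, hcomp j]
    rcases lt_or_gt_of_ne hij with h | h
    · exact (indepFun_dig hα h).comp measurable_from_nat measurable_from_nat
    · exact ((indepFun_dig hα h).comp measurable_from_nat measurable_from_nat).symm
  have hident : ∀ i, IdentDistrib (X i) (X 0) μ μ := by
    intro i
    have hid : IdentDistrib (dig α i) (dig α 0) μ μ :=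
      ⟨(measurable_dig hα i).aemeasurable, (measurable_dig hα 0).aemeasurable,
        by rw [hμ, map_dig hα, map_dig hα]⟩
    exact hid.comp (measurable_from_nat (f := fun k : ℕ => Real.log k))
  have h := strong_law_ae_real X hint hindep hident
  have hE : μ[X 0] = ∑' k : ℕ, (α - 1) * α ^ (-(k + 1 : ℤ)) * Real.log (k + 1) := by
    have h0 : X 0 = fun x => Real.log (D α x) := by funext x; simp only [hX, hdig0]
    rw [h0, hμ, integral_logD hα]
  rwa [hE] at h

end AlphaExp

end Part6

theorem digit_geometric_mean_ae (α : ℝ) (hα : 1 < α) :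
    ∀ᵐ x ∂(volume.restrict (Set.Ioc (0 : ℝ) 1)),
      ∀ d : ℕ → ℕ, (∀ i, 1 ≤ d i) → alphaExpansion α d = x →
        Tendsto (fun n : ℕ => (∏ i ∈ Finset.range n, (d i : ℝ)) ^ (1 / (n : ℝ)))
          atTop (nhds (∏' e : ℕ, ((e + 1 : ℝ)) ^ ((α - 1) / α ^ (e + 1)))) ∧
        Tendsto (fun n : ℕ => (∑ i ∈ Finset.range n, Real.log (d i)) / n)
          atTop (nhds (∑' e : ℕ, (α - 1) * α ^ (-(e + 1 : ℤ)) * Real.log (e + 1))) := by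
  classical
  have hα0 : (0 : ℝ) < α := lt_trans one_pos hα
  set E : ℝ := ∑' e : ℕ, (α - 1) * α ^ (-(e + 1 : ℤ)) * Real.log (e + 1) with hE
  -- the infinite product is exp E
  have hprod : (∏' e : ℕ, ((e + 1 : ℝ)) ^ ((α - 1) / α ^ (e + 1))) = Real.exp E := by
    have hfeq : (fun e : ℕ => (α - 1) * α ^ (-(e + 1 : ℤ)) * Real.log (e + 1))
        = fun e : ℕ => Real.log ((e : ℝ) + 1) * ((α - 1) / α ^ (e + 1)) := by
      funext e
      rw [AlphaExp.zpow_neg_eq_inv_pow hα e, inv_pow, div_eq_mul_inv]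
      push_cast
      ring
    have hsum : HasSum (fun e : ℕ => Real.log ((e : ℝ) + 1) * ((α - 1) / α ^ (e + 1))) E := by
      rw [hE, ← hfeq]
      exact (AlphaExp.summable_plog hα).hasSum
    have hp := hsum.rexp
    have hfac : (Real.exp ∘ fun e : ℕ => Real.log ((e : ℝ) + 1) * ((α - 1) / α ^ (e + 1)))
        = fun e : ℕ => ((e + 1 : ℝ)) ^ ((α - 1) / α ^ (e + 1)) := by
      funext e
      simp only [Function.comp_apply]
      rw [Real.rpow_def_of_pos (by positivity : (0:ℝ) < (e : ℝ) + 1)]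
    rw [hfac] at hp
    exact hp.tprod_eq
  filter_upwards [AlphaExp.strong_law hα] with x hx
  intro d hd hdx
  -- uniqueness of digits
  have hdig : ∀ n, d n = AlphaExp.dig α n x := by
    intro n
    rw [AlphaExp.dig, ← hdx]
    exact AlphaExp.digits_eq hα n d hd
  have hsecond : Tendsto (fun n : ℕ => (∑ i ∈ Finset.range n, Real.log (d i)) / n)
      atTop (nhds E) := by
    have : (fun n : ℕ => (∑ i ∈ Finset.range n, Real.log (d i)) / n)
        = fun n : ℕ => (∑ i ∈ Finset.range n, Real.log (AlphaExp.dig α i x)) / n := by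
      funext n
      congr 1
      exact Finset.sum_congr rfl fun i _ => by rw [hdig i]
    rw [this]
    exact hx
  refine ⟨?_, hsecond⟩
  -- geometric mean = exp of average of logs
  have hfun : ∀ n : ℕ, (∏ i ∈ Finset.range n, (d i : ℝ)) ^ (1 / (n : ℝ))
      = Real.exp ((∑ i ∈ Finset.range n, Real.log (d i)) / n) := by
    intro n
    have hpos : ∀ i ∈ Finset.range n, (0:ℝ) < (d i : ℝ) := fun i _ => by
      exact_mod_cast Nat.lt_of_lt_of_le Nat.zero_lt_one (hd i)
    have hP : (0:ℝ) < ∏ i ∈ Finset.range n, (d i : ℝ) := Finset.prod_pos hpos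
    rw [Real.rpow_def_of_pos hP, Real.log_prod (fun i hi => ne_of_gt (hpos i hi)),
      mul_one_div]
  rw [hprod]
  have := (Real.continuous_exp.tendsto E).comp hsecond
  convert this using 1
  funext n
  rw [hfun n]
  rfl
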